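/- After a vertex v executes rule R1 (changing its state from Out to In, with all its neighbors u having state Out and exp 0 beforehand), no vertex w at distance ≤ 2 from v can subsequently satisfy the guard of R1, since w has a vertex at distance ≤ 2 (namely v) with state In, which makes either some neighbor of w have state In or exp ≥ 1. -/

import Mathlib

variable {V : Type*} [Fintype V] [DecidableEq V]

/-- `S` is a distance-2 independent set: any two distinct vertices of `S`
are at graph distance strictly greater than 2. -/
def Dist2Indep (G : SimpleGraph V) (S : Set V) : Prop :=
  ∀ u ∈ S, ∀ v ∈ S, u ≠ v → 2 < G.edist u v

/-- `exp G s u` counts the neighbors of `u` whose state is `In` (`true`). -/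
def expIn (G : SimpleGraph V) [DecidableRel G.Adj] (s : V → Bool) (u : V) : ℕ :=
  ((G.neighborFinset u).filter (fun w => s w = true)).card

/-- Guard of rule R1 at `v`: `v` is Out and every neighbor is Out with exp 0. -/
def R1guard (G : SimpleGraph V) [DecidableRel G.Adj] (s : V → Bool) (v : V) : Prop :=
  s v = false ∧ ∀ u ∈ G.neighborSet v, s u = false ∧ expIn G s u = 0

/-- Guard of rule R2 at `v`: `v` is In and some neighbor is In or has exp > 1. -/
def R2guard (G : SimpleGraph V) [DecidableRel G.Adj] (s : V → Bool) (v : V) : Prop :=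
  s v = true ∧ ∃ u ∈ G.neighborSet v, s u = true ∨ 1 < expIn G s u

theorem stmt_7 (G : SimpleGraph V) [DecidableRel G.Adj] (s : V → Bool) (v w : V)
    (hv : s v = true) (hw : w ≠ v) (hd : G.edist v w ≤ 2) :
    ¬ R1guard G s w := by
  rintro ⟨hwOut, hnb⟩
  obtain ⟨p, hp⟩ := SimpleGraph.exists_walk_of_edist_ne_top
    (G := G) (u := v) (v := w) (by intro h; rw [h] at hd; exact (by simp at hd))
  have hlen : p.length ≤ 2 := by
    have := hp ▸ hd
    exact_mod_cast this
  match p with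
  | SimpleGraph.Walk.nil => exact hw rfl
  | SimpleGraph.Walk.cons h SimpleGraph.Walk.nil =>
      -- v adjacent to w
      have := (hnb v (by simpa using h.symm)).1
      rw [hv] at this; exact Bool.noConfusion this
  | SimpleGraph.Walk.cons h (SimpleGraph.Walk.cons h' SimpleGraph.Walk.nil) =>
      rename_i x
      have hx : x ∈ G.neighborSet w := by simpa using h'.symm
      have hexp := (hnb x hx).2
      have : v ∈ (G.neighborFinset x).filter (fun z => s z = true) := by
        simp [SimpleGraph.mem_neighborFinset, h.symm, hv]
      rw [expIn] at hexp
      simp [Finset.card_eq_zero] at hexp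
      exact absurd (hexp h.symm) (by simp [hv])
  | SimpleGraph.Walk.cons _ (SimpleGraph.Walk.cons _ (SimpleGraph.Walk.cons _ _)) =>
      simp [SimpleGraph.Walk.length_cons] at hlen
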